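/- Let ζ ∈ GI(q) be an element of multiplicative order N, with p ≡ 3 (mod 4), q = p^r, and p ∤ N. Define the FFHT of v = (v_0,...,v_{N−1}) ∈ GF(q)^N by V_k = Σ_{i=0}^{N−1} v_i·cas(ik). Then the inversion formula holds: v_i = N^{-1}·Σ_{k=0}^{N−1} V_k·cas(ik) for all i, where N^{-1} is the inverse of N mod p in GF(q). -/

import Mathlib

open Polynomial

/-- The Gaussian integers over GF(q), q = p^r: GI(q) = GF(q)[j]/(j²+1). -/
noncomputable abbrev GI (p r : ℕ) [Fact p.Prime] : Type :=
  AdjoinRoot (X ^ 2 + 1 : (GaloisField p r)[X])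

/-- The element j (class of X) in GI(q). -/
noncomputable def jGI (p r : ℕ) [Fact p.Prime] : GI p r := AdjoinRoot.root _

/-- The Hartley kernel cas(i) = cos(i) + sin(i)
    where cos(i) = (ζ^i + ζ^{-i})/2 and sin(i) = (ζ^i − ζ^{-i})/(2j). -/
noncomputable def cas (p r : ℕ) [Fact p.Prime]
    [Fact (Irreducible (X ^ 2 + 1 : (GaloisField p r)[X]))]
    (ζ : GI p r) (i : ℤ) : GI p r :=
  (ζ ^ i + ζ ^ (-i)) / 2 + (ζ ^ i - ζ ^ (-i)) / (2 * jGI p r)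

/-- Key algebraic identity for the product of two Hartley kernels. -/
lemma cas_mul_key {K : Type*} [Field K] (j u v u' v' : K) (hj : j ^ 2 = -1)
    (h2 : (2 : K) ≠ 0) :
    ((u + u') / 2 + (u - u') / (2 * j)) * ((v + v') / 2 + (v - v') / (2 * j)) =
      (1 / 2) * (u * v' + u' * v) + (j / 2) * (u' * v' - u * v) := by
  have hj0 : j ≠ 0 := by
    intro h; rw [h] at hj; norm_num at hj
  field_simp
  ring_nf
  linear_combination ((u*v - u*v' - v*u' + v'*u') + 2*j*(u*v - v'*u')) * hj

/-- Orthogonality sum: Σ_{k<N} ζ^{ck} = N if N ∣ c, else 0. -/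
lemma sum_zpow_eq {K : Type*} [Field K] (ζ : K) (hζ : ζ ≠ 0) (N : ℕ)
    (hN : orderOf ζ = N) (c : ℤ) :
    ∑ k : Fin N, ζ ^ (c * (k : ℤ)) = if (N : ℤ) ∣ c then (N : K) else 0 := by
  set u : Kˣ := Units.mk0 ζ hζ with hu
  have hou : orderOf u = N := by rw [← hN]; exact (orderOf_units (y := u)).symm
  have hval : ((u ^ c : Kˣ) : K) = ζ ^ c := Units.val_zpow_eq_zpow_val u c
  have hdvd : ζ ^ c = 1 ↔ (N : ℤ) ∣ c := by
    rw [← hou, orderOf_dvd_iff_zpow_eq_one]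
    constructor
    · intro h
      exact Units.ext (by rw [hval, Units.val_one]; exact h)
    · intro h
      rw [← hval, h, Units.val_one]
  have hzc : ∀ k : Fin N, ζ ^ (c * (k : ℤ)) = (ζ ^ c) ^ (k : ℕ) := fun k => by
    rw [zpow_mul, ← zpow_natCast (ζ ^ c)]
  simp_rw [hzc]
  by_cases h : (N : ℤ) ∣ c
  · simp [hdvd.mpr h, h]
  · rw [if_neg h]
    have hx1 : ζ ^ c ≠ 1 := fun h1 => h (hdvd.mp h1)
    have hxN : (ζ ^ c) ^ N = 1 := by
      rw [← zpow_natCast (ζ ^ c), ← zpow_mul, mul_comm, zpow_mul, ← hN,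
        zpow_natCast, pow_orderOf_eq_one, one_zpow]
    have hgs := geom_sum_mul (ζ ^ c) N
    rw [hxN, sub_self] at hgs
    have hsum : ∑ i ∈ Finset.range N, (ζ ^ c) ^ i = 0 :=
      (mul_eq_zero.mp hgs).resolve_right (sub_ne_zero.mpr hx1)
    rw [Fin.sum_univ_eq_sum_range]
    exact hsum

/-- Inversion formula for the FFHT: if V_k = Σ_i v_i·cas(ik) is the finite field
Hartley transform of v ∈ GF(q)^N, then v_i = N^{-1}·Σ_k V_k·cas(ik). -/
theorem ffht_inversion (p r N : ℕ) [Fact p.Prime] (hp : p % 4 = 3)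
    [Fact (Irreducible (X ^ 2 + 1 : (GaloisField p r)[X]))]
    (hpN : ¬ p ∣ N) (hN0 : 0 < N)
    (ζ : GI p r) (hζ : ζ ≠ 0) (hN : orderOf ζ = N)
    (v : Fin N → GaloisField p r)
    (V : Fin N → GI p r)
    (hV : ∀ k : Fin N, V k =
      ∑ i : Fin N, algebraMap (GaloisField p r) (GI p r) (v i) * cas p r ζ ((i : ℤ) * k)) :
    ∀ i : Fin N, algebraMap (GaloisField p r) (GI p r) (v i) =
      (N : GI p r)⁻¹ * ∑ k : Fin N, V k * cas p r ζ ((i : ℤ) * k) := by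
  intro i
  haveI : CharP (GI p r) p :=
    charP_of_injective_ringHom (algebraMap (GaloisField p r) (GI p r)).injective p
  have hj : (jGI p r) ^ 2 = -1 := by
    have h := AdjoinRoot.isRoot_root (X ^ 2 + 1 : (GaloisField p r)[X])
    simp [IsRoot] at h
    rw [jGI]
    linear_combination h
  have hp2 : p ≠ 2 := by omega
  have h2 : (2 : GI p r) ≠ 0 := by
    have h2' : ((2 : ℕ) : GI p r) ≠ 0 := by
      rw [Ne, CharP.cast_eq_zero_iff (GI p r) p]
      intro hd
      have := Nat.le_of_dvd (by norm_num) hd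
      omega
    exact_mod_cast h2'
  -- pointwise product identity
  have hprod : ∀ a b : ℤ, cas p r ζ a * cas p r ζ b =
      (1 / 2) * (ζ ^ (a - b) + ζ ^ (b - a)) +
      (jGI p r / 2) * (ζ ^ (-(a + b)) - ζ ^ (a + b)) := by
    intro a b
    have key := cas_mul_key (jGI p r) (ζ ^ a) (ζ ^ b) (ζ ^ (-a)) (ζ ^ (-b)) hj h2
    rw [cas, cas, key]
    simp only [zpow_sub₀ hζ, zpow_add₀ hζ, neg_add, zpow_neg, div_eq_mul_inv]
    ring
  -- orthogonality: Σ_k cas(ak) cas(bk) = S(a-b)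
  have horth : ∀ a b : ℤ, ∑ k : Fin N, cas p r ζ (a * k) * cas p r ζ (b * k) =
      if (N : ℤ) ∣ (a - b) then (N : GI p r) else 0 := by
    intro a b
    have : ∀ k : Fin N, cas p r ζ (a * k) * cas p r ζ (b * k) =
        (1 / 2) * (ζ ^ ((a - b) * k) + ζ ^ ((b - a) * k)) +
        (jGI p r / 2) * (ζ ^ ((-(a + b)) * k) - ζ ^ ((a + b) * k)) := by
      intro k
      rw [hprod (a * k) (b * k)]
      ring_nf
    simp_rw [this]
    rw [Finset.sum_add_distrib, ← Finset.mul_sum, ← Finset.mul_sum,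
      Finset.sum_add_distrib, Finset.sum_sub_distrib,
      sum_zpow_eq ζ hζ N hN (a - b), sum_zpow_eq ζ hζ N hN (b - a),
      sum_zpow_eq ζ hζ N hN (-(a + b)), sum_zpow_eq ζ hζ N hN (a + b)]
    have e1 : (if (N : ℤ) ∣ (b - a) then (N : GI p r) else 0)
        = (if (N : ℤ) ∣ (a - b) then (N : GI p r) else 0) :=
      if_congr (by rw [← dvd_neg, neg_sub]) rfl rfl
    have e2 : (if (N : ℤ) ∣ (-(a + b)) then (N : GI p r) else 0)
        = (if (N : ℤ) ∣ (a + b) then (N : GI p r) else 0) :=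
      if_congr (dvd_neg) rfl rfl
    rw [e1, e2, sub_self, mul_zero, add_zero]
    by_cases h : (N : ℤ) ∣ (a - b)
    · simp only [if_pos h]; field_simp; ring
    · simp [h]
  -- main computation
  have hNne : (N : GI p r) ≠ 0 := by
    intro h
    exact hpN ((CharP.cast_eq_zero_iff (GI p r) p N).mp h)
  rw [eq_comm, inv_mul_eq_iff_eq_mul₀ hNne]
  calc ∑ k : Fin N, V k * cas p r ζ ((i : ℤ) * k)
      = ∑ k : Fin N, ∑ m : Fin N, algebraMap (GaloisField p r) (GI p r) (v m) *
          (cas p r ζ ((m : ℤ) * k) * cas p r ζ ((i : ℤ) * k)) := by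
        refine Finset.sum_congr rfl fun k _ => ?_
        rw [hV k, Finset.sum_mul]
        exact Finset.sum_congr rfl fun m _ => by ring
    _ = ∑ m : Fin N, algebraMap (GaloisField p r) (GI p r) (v m) *
          ∑ k : Fin N, cas p r ζ ((m : ℤ) * k) * cas p r ζ ((i : ℤ) * k) := by
        rw [Finset.sum_comm]
        exact Finset.sum_congr rfl fun m _ => by rw [Finset.mul_sum]
    _ = ∑ m : Fin N, algebraMap (GaloisField p r) (GI p r) (v m) *
          (if (N : ℤ) ∣ ((m : ℤ) - (i : ℤ)) then (N : GI p r) else 0) := by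
        exact Finset.sum_congr rfl fun m _ => by rw [horth]
    _ = (N : GI p r) * algebraMap (GaloisField p r) (GI p r) (v i) := by
        rw [Finset.sum_eq_single i]
        · rw [if_pos (by simp), mul_comm]
        · intro m _ hmi
          rw [if_neg, mul_zero]
          intro hd
          apply hmi
          have h1 : ((m : ℤ) - (i : ℤ)).natAbs < N := by
            have := m.isLt; have := i.isLt; omega
          have h2 := Int.natAbs_dvd_natAbs.mpr hd
          simp only [Int.natAbs_natCast] at h2
          have := Nat.eq_zero_of_dvd_of_lt h2 h1
          have : (m : ℤ) = (i : ℤ) := by omega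
          exact Fin.ext (by exact_mod_cast this)
        · intro h; exact absurd (Finset.mem_univ i) h
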